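/- Let $K \subseteq L$ be fields and let $X = \{x_1,\dots,x_a\}$, $Y = \{y_1,\dots,y_b\}$, $Z = \{z_1,\dots,z_c\}$ be pairwise disjoint finite subsets of $L$ such that $X \cup Y \cup Z$ is algebraically independent over $K$. Let $F = \{f_1,\dots,f_a\}$ with each $f_i \in K(X \cup Z)$ and $G = \{g_1,\dots,g_b\}$ with each $g_j \in K(Y \cup Z)$. If $F \cup Z$ is algebraically independent over $K$ and $G \cup Z$ is algebraically independent over $K$, then $F \cup Z \cup G$ is algebraically independent over $K$. -/

import Mathlib

open MvPolynomial

/-- Restrict algebraic independence to a smaller base ring along an injective map. -/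
theorem aux_down {A B L : Type*} [CommRing A] [CommRing B] [CommRing L]
    [Algebra A L] [Algebra B L] {κ : Type*} {v : κ → L}
    (f : A →+* B) (hf : Function.Injective f)
    (hcomp : (algebraMap B L).comp f = algebraMap A L)
    (hv : AlgebraicIndependent B v) : AlgebraicIndependent A v := by
  refine AlgebraicIndependent.of_ringHom_of_comp_eq (f := f) (g := RingHom.id L)
    (show AlgebraicIndependent B (⇑(RingHom.id L) ∘ v) from hv) hf ?_
  ext a
  simpa using RingHom.congr_fun hcomp a

/-- Inclusion of subobjects of `L` as a ring hom. -/
def inclRingHom {L : Type*} [Ring L] {M N : Type*} [SetLike M L] [SetLike N L]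
    [SubringClass M L] [SubringClass N L] (S : M) (T : N) (h : (S : Set L) ⊆ T) :
    ↥S →+* ↥T where
  toFun a := ⟨a.1, h a.2⟩
  map_one' := by ext; simp
  map_mul' a b := by ext; simp
  map_zero' := by ext; simp
  map_add' a b := by ext; simp

theorem inclRingHom_injective {L : Type*} [Ring L] {M N : Type*} [SetLike M L] [SetLike N L]
    [SubringClass M L] [SubringClass N L] (S : M) (T : N) (h : (S : Set L) ⊆ T) :
    Function.Injective (inclRingHom S T h) := fun a b hab =>
  Subtype.ext (congrArg (Subtype.val : ↥T → L) hab)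

/-- Upgrade algebraic independence over `Algebra.adjoin` to `IntermediateField.adjoin`. -/
theorem aux_up {K L : Type*} [Field K] [Field L] [Algebra K L] {ι κ : Type*}
    {u : ι → L} (hu : AlgebraicIndependent K u) {v : κ → L}
    (hv : AlgebraicIndependent (Algebra.adjoin K (Set.range u)) v) :
    AlgebraicIndependent (IntermediateField.adjoin K (Set.range u)) v := by
  classical
  set S := Algebra.adjoin K (Set.range u) with hSdef
  set E := IntermediateField.adjoin K (Set.range u) with hEdef
  have hmem : ∀ q : MvPolynomial ι K, aeval u q ∈ S := by
    intro q
    rw [hSdef, Algebra.adjoin_range_eq_range_aeval]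
    exact ⟨q, rfl⟩
  have key : ∀ e : E, ∃ d : L, d ∈ S ∧ d ≠ 0 ∧ d * (e : L) ∈ S := by
    rintro ⟨e, he⟩
    rw [hEdef, IntermediateField.mem_adjoin_range_iff] at he
    obtain ⟨r, s, rfl⟩ := he
    by_cases hs : (aeval u) s = 0
    · exact ⟨1, one_mem _, one_ne_zero, by
        show 1 * ((aeval u) r / (aeval u) s) ∈ S
        rw [hs, div_zero, mul_zero]; exact zero_mem S⟩
    · refine ⟨aeval u s, hmem s, hs, ?_⟩
      rw [mul_div_cancel₀ _ hs]
      exact hmem r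
  rw [algebraicIndependent_iff] at hv ⊢
  intro p hp
  choose d hdS hd0 hdmul using key
  set D : L := ∏ m ∈ p.support, d (p.coeff m) with hDdef
  have hD0 : D ≠ 0 := Finset.prod_ne_zero_iff.2 fun m _ => hd0 _
  have hpf : ∀ m : κ →₀ ℕ, D * ((p.coeff m : ↥E) : L) ∈ S := by
    intro m
    by_cases hm : m ∈ p.support
    · have hD : D = d (p.coeff m) * ∏ m' ∈ p.support.erase m, d (p.coeff m') :=
        (Finset.mul_prod_erase _ _ hm).symm
      rw [hD, mul_right_comm]
      exact mul_mem (hdmul _) (prod_mem fun m' _ => hdS _)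
    · rw [notMem_support_iff.1 hm]
      simp only [ZeroMemClass.coe_zero, mul_zero]
      exact zero_mem S
  set q : MvPolynomial κ S := ∑ m ∈ p.support, monomial m ⟨D * ((p.coeff m : ↥E) : L), hpf m⟩
    with hqdef
  have hq : aeval v q = 0 := by
    have hsum : (aeval v q : L) = D * (aeval v p : L) := by
      conv_rhs => rw [MvPolynomial.as_sum p]
      rw [hqdef, map_sum, map_sum, Finset.mul_sum]
      refine Finset.sum_congr rfl fun m hm => ?_
      rw [aeval_monomial, aeval_monomial]
      show (D * ((p.coeff m : ↥E) : L)) * _ = D * (((p.coeff m : ↥E) : L) * _)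
      ring
    rw [hsum, hp, mul_zero]
  have hq0 := hv q hq
  ext m
  by_cases hm : m ∈ p.support
  · have h1 : (coeff m q : ↥S) = 0 := by rw [hq0]; simp
    rw [hqdef] at h1
    rw [MvPolynomial.coeff_sum] at h1
    simp_rw [MvPolynomial.coeff_monomial] at h1
    rw [Finset.sum_ite_eq' p.support m] at h1
    rw [if_pos hm] at h1
    have h2 : D * ((p.coeff m : ↥E) : L) = 0 := congrArg Subtype.val h1
    have h3 : ((p.coeff m : ↥E) : L) = 0 := by
      rcases mul_eq_zero.1 h2 with h | h
      · exact absurd h hD0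
      · exact h
    have : (p.coeff m : ↥E) = 0 := Subtype.ext h3
    rw [this]; simp
  · rw [notMem_support_iff.1 hm]; simp

theorem aux_sumElim_iff {R A : Type*} [CommRing R] [CommRing A] [Algebra R A]
    {ι κ : Type*} (v : κ → A) {u : ι → A} (hu : AlgebraicIndependent R u) :
    AlgebraicIndependent R (Sum.elim v u) ↔
      AlgebraicIndependent (Algebra.adjoin R (Set.range u)) v := by
  classical
  set S := Algebra.adjoin R (Set.range u) with hS
  have hcomp :
      (((aeval v : MvPolynomial κ S →ₐ[S] A) : MvPolynomial κ S →+* A).comp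
        ((MvPolynomial.map (hu.aevalEquiv : MvPolynomial ι R →+* S)).comp
          (sumToIter R κ ι))) =
      ((aeval (Sum.elim v u) : MvPolynomial (κ ⊕ ι) R →ₐ[R] A) : MvPolynomial (κ ⊕ ι) R →+* A) := by
    apply ringHom_ext
    · intro r
      have h1 : (hu.aevalEquiv) (C r) = algebraMap R S r := by
        rw [← MvPolynomial.algebraMap_eq]; exact hu.aevalEquiv.commutes r
      simp only [RingHom.comp_apply, sumToIter_C, map_C, AlgHom.coe_toRingHom, aeval_C,
        RingEquiv.coe_toRingHom]
      rw [show ((hu.aevalEquiv : MvPolynomial ι R →+* S) (C r)) = algebraMap R S r from h1,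
        ← IsScalarTower.algebraMap_apply]
    · rintro (k | i)
      · simp only [RingHom.comp_apply, sumToIter_Xl, map_X, AlgHom.coe_toRingHom, aeval_X,
          Sum.elim_inl]
      · simp only [RingHom.comp_apply, sumToIter_Xr, map_C, AlgHom.coe_toRingHom, aeval_C,
          Sum.elim_inr]
        rw [show ((hu.aevalEquiv : MvPolynomial ι R →+* S) (X i)) = hu.aevalEquiv (X i) from rfl,
          hu.algebraMap_aevalEquiv, aeval_X]
        simp
  have hbij : Function.Bijective
      (⇑(MvPolynomial.map (hu.aevalEquiv : MvPolynomial ι R →+* S)) ∘ ⇑(sumToIter R κ ι)) := by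
    refine Function.Bijective.comp ⟨MvPolynomial.map_injective _ hu.aevalEquiv.injective,
      MvPolynomial.map_surjective _ hu.aevalEquiv.surjective⟩ ?_
    have hse : sumToIter R κ ι = (sumRingEquiv R κ ι : MvPolynomial (κ ⊕ ι) R →+* _) := by
      apply ringHom_ext
      · intro r; simp [sumToIter_C]
      · rintro (k | i) <;> simp [sumToIter_Xl, sumToIter_Xr]
    rw [hse]; exact (sumRingEquiv R κ ι).bijective
  rw [algebraicIndependent_iff_injective_aeval, algebraicIndependent_iff_injective_aeval]
  have heq : (⇑(aeval (Sum.elim v u) : MvPolynomial (κ ⊕ ι) R →ₐ[R] A) :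
      MvPolynomial (κ ⊕ ι) R → A) =
      ⇑(aeval v : MvPolynomial κ S →ₐ[S] A) ∘
        (⇑(MvPolynomial.map (hu.aevalEquiv : MvPolynomial ι R →+* S)) ∘ ⇑(sumToIter R κ ι)) := by
    funext p
    exact (RingHom.congr_fun hcomp p).symm
  rw [heq, Function.Injective.of_comp_iff' _ hbij]


/-- If `X ∪ Y ∪ Z` is algebraically independent over `K`, the `f i` lie in `K(X ∪ Z)`,
the `g j` lie in `K(Y ∪ Z)`, and both `F ∪ Z` and `G ∪ Z` are algebraically independent
over `K`, then `F ∪ Z ∪ G` is algebraically independent over `K`. -/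
theorem algIndep_of_two_families (K L : Type*) [Field K] [Field L] [Algebra K L]
    (a b c : ℕ) (x : Fin a → L) (y : Fin b → L) (z : Fin c → L)
    (hdisj₁ : ∀ i j, x i ≠ y j) (hdisj₂ : ∀ i j, x i ≠ z j) (hdisj₃ : ∀ i j, y i ≠ z j)
    (hXYZ : AlgebraicIndependent K (Sum.elim x (Sum.elim y z)))
    (f : Fin a → L) (g : Fin b → L)
    (hf : ∀ i, f i ∈ IntermediateField.adjoin K (Set.range x ∪ Set.range z))
    (hg : ∀ j, g j ∈ IntermediateField.adjoin K (Set.range y ∪ Set.range z))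
    (hFZ : AlgebraicIndependent K (Sum.elim f z))
    (hGZ : AlgebraicIndependent K (Sum.elim g z)) :
    AlgebraicIndependent K (Sum.elim f (Sum.elim z g)) := by
  classical
  have hz : AlgebraicIndependent K z := hGZ.comp Sum.inr Sum.inr_injective
  set w : Fin b ⊕ Fin c → L := Sum.elim y z with hw
  have hwind : AlgebraicIndependent K w := hXYZ.comp Sum.inr Sum.inr_injective
  set Eyz := IntermediateField.adjoin K (Set.range w) with hEyz
  have hx_yz : AlgebraicIndependent (↥Eyz) x :=
    aux_up hwind ((aux_sumElim_iff x hwind).1 hXYZ)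
  set K0 := IntermediateField.adjoin K (Set.range z) with hK0
  have hg0 : AlgebraicIndependent (↥K0) g :=
    aux_up hz ((aux_sumElim_iff g hz).1 hGZ)
  have hrw : Set.range w = Set.range y ∪ Set.range z := Set.Sum.elim_range y z
  have hEyz' : Eyz = IntermediateField.adjoin K (Set.range y ∪ Set.range z) := by
    rw [hEyz, hrw]
  have hzK0 : ∀ j, z j ∈ K0 := fun j =>
    IntermediateField.subset_adjoin K _ ⟨j, rfl⟩
  have hK0le : ∀ l ∈ K0, l ∈ Eyz := by
    intro l hl
    refine IntermediateField.adjoin_le_iff.2 ?_ hl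
    intro t ht
    exact IntermediateField.subset_adjoin K _ (by rw [hrw]; exact Or.inr ht)
  have hgEyz : ∀ j, g j ∈ Eyz := fun j => hEyz' ▸ hg j
  -- x is algebraically independent over the ring generated by K0 and g
  have hsub1 : (Algebra.adjoin (↥K0) (Set.range g) : Set L) ⊆ (Eyz : Set L) := by
    intro l hl
    refine Algebra.adjoin_induction ?_ ?_ ?_ ?_ hl
    · rintro _ ⟨j, rfl⟩; exact hgEyz j
    · intro k; exact hK0le _ k.2
    · intro _ _ _ _ ha hb; exact add_mem ha hb
    · intro _ _ _ _ ha hb; exact mul_mem ha hb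
  have hx0g : AlgebraicIndependent (↥(Algebra.adjoin (↥K0) (Set.range g))) x :=
    aux_down (inclRingHom _ Eyz hsub1) (inclRingHom_injective _ _ _) (by ext p; rfl) hx_yz
  have happ : AlgebraicIndependent (↥K0) (Sum.elim x g) := (aux_sumElim_iff x hg0).2 hx0g
  have hx0 : AlgebraicIndependent (↥K0) x := happ.comp Sum.inl Sum.inl_injective
  have hswap : AlgebraicIndependent (↥K0) (Sum.elim g x) :=
    (algebraicIndependent_equiv' (Equiv.sumComm (Fin b) (Fin a))
      (f := Sum.elim x g) (g := Sum.elim g x) (by funext s; cases s <;> rfl)).2 happ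
  set E1 := IntermediateField.adjoin (↥K0) (Set.range x) with hE1
  have hgE1 : AlgebraicIndependent (↥E1) g :=
    aux_up hx0 ((aux_sumElim_iff g hx0).1 hswap)
  -- the ring generated by f's and z's sits inside E1
  have hzE1 : ∀ j, z j ∈ E1 := by
    intro j
    have h1 : z j = algebraMap (↥K0) L ⟨z j, hzK0 j⟩ := rfl
    rw [h1]
    exact E1.algebraMap_mem _
  have hxE1 : ∀ i, x i ∈ E1 := fun i => IntermediateField.subset_adjoin _ _ ⟨i, rfl⟩
  have hfE1 : ∀ i, f i ∈ E1 := by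
    intro i
    have hle : IntermediateField.adjoin K (Set.range x ∪ Set.range z) ≤
        IntermediateField.restrictScalars K E1 := by
      refine IntermediateField.adjoin_le_iff.2 ?_
      rintro t (⟨i, rfl⟩ | ⟨j, rfl⟩)
      · exact hxE1 i
      · exact hzE1 j
    exact hle (hf i)
  have hsub2 : (Algebra.adjoin K (Set.range (Sum.elim f z)) : Set L) ⊆ (E1 : Set L) := by
    intro l hl
    refine Algebra.adjoin_induction ?_ ?_ ?_ ?_ hl
    · rintro _ ⟨(i | j), rfl⟩
      · exact hfE1 i
      · exact hzE1 j
    · intro k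
      have h1 : algebraMap K L k = algebraMap (↥K0) L (algebraMap K (↥K0) k) :=
        IsScalarTower.algebraMap_apply K (↥K0) L k
      rw [h1]
      exact E1.algebraMap_mem _
    · intro _ _ _ _ ha hb; exact add_mem ha hb
    · intro _ _ _ _ ha hb; exact mul_mem ha hb
  have hgS : AlgebraicIndependent (↥(Algebra.adjoin K (Set.range (Sum.elim f z)))) g :=
    aux_down (inclRingHom _ E1 hsub2) (inclRingHom_injective _ _ _) (by ext p; rfl) hgE1
  have hfinal : AlgebraicIndependent K (Sum.elim g (Sum.elim f z)) :=
    (aux_sumElim_iff g hFZ).2 hgS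
  let e : (Fin b ⊕ (Fin a ⊕ Fin c)) ≃ (Fin a ⊕ (Fin c ⊕ Fin b)) :=
    { toFun := Sum.elim (fun j => Sum.inr (Sum.inr j))
        (Sum.elim (fun i => Sum.inl i) fun k => Sum.inr (Sum.inl k))
      invFun := Sum.elim (fun i => Sum.inr (Sum.inl i))
        (Sum.elim (fun k => Sum.inr (Sum.inr k)) fun j => Sum.inl j)
      left_inv := by rintro (j | i | k) <;> rfl
      right_inv := by rintro (i | k | j) <;> rfl }
  refine (algebraicIndependent_equiv' e (f := Sum.elim f (Sum.elim z g))
    (g := Sum.elim g (Sum.elim f z)) ?_).1 hfinal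
  funext s
  rcases s with j | i | k <;> rfl
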